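/- Carnot's theorem (1803). Let ABC be a nondegenerate triangle whose side lengths are pairwise distinct (dist A B, dist B C, dist C A pairwise unequal), and let O be its circumcenter. Suppose T_A is a point on line BC with ⟪T_A − A, O − A⟫ = 0 (so T_A lies on the tangent to the circumcircle at A), T_B is a point on line CA with ⟪T_B − B, O − B⟫ = 0, and T_C is a point on line AB with ⟪T_C − C, O − C⟫ = 0. Then T_A, T_B, T_C are collinear. -/

import Mathlib

set_option maxHeartbeats 1000000

noncomputable section

private theorem carnot_key (b0 b1 c0 c1 o0 o1 r s u : ℝ)
    (hd : b0*c1 - b1*c0 ≠ 0)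
    (hb : 2*(o0*b0 + o1*b1) = b0^2 + b1^2)
    (hc : 2*(o0*c0 + o1*c1) = c0^2 + c1^2)
    (hDa : (c0-b0)*o0 + (c1-b1)*o1 ≠ 0)
    (hDb : c0*(o0-b0) + c1*(o1-b1) ≠ 0)
    (hDc : b0*(o0-c0) + b1*(o1-c1) ≠ 0)
    (hr : r * ((c0-b0)*o0 + (c1-b1)*o1) = -(b0*o0 + b1*o1))
    (hs : s * (c0*(o0-b0) + c1*(o1-b1)) = (c0-b0)*(o0-b0) + (c1-b1)*(o1-b1))
    (hu : u * (b0*(o0-c0) + b1*(o1-c1)) = c0*(o0-c0) + c1*(o1-c1)) :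
    ((1-s)*c0 - (b0 + r*(c0-b0))) * (u*b1 - (b1 + r*(c1-b1))) -
    ((1-s)*c1 - (b1 + r*(c1-b1))) * (u*b0 - (b0 + r*(c0-b0))) = 0 := by
  have hM : ((2*(b0*c1 - b1*c0))^3 * ((c0-b0)*o0 + (c1-b1)*o1) * (c0*(o0-b0) + c1*(o1-b1)) * (b0*(o0-c0) + b1*(o1-c1))) ≠ 0 :=
    mul_ne_zero (mul_ne_zero (mul_ne_zero (pow_ne_zero _ (mul_ne_zero two_ne_zero hd)) hDa) hDb) hDc
  have cert : ((2*(b0*c1 - b1*c0))^3 * ((c0-b0)*o0 + (c1-b1)*o1) * (c0*(o0-b0) + c1*(o1-b1)) * (b0*(o0-c0) + b1*(o1-c1))) *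
      (((1-s)*c0 - (b0 + r*(c0-b0))) * (u*b1 - (b1 + r*(c1-b1))) -
       ((1-s)*c1 - (b1 + r*(c1-b1))) * (u*b0 - (b0 + r*(c0-b0)))) = 0 := by
    linear_combination
      ((8*b1^4*c0^4*c1^2*o1^2 + (-8)*b1^4*c0^4*c1^3*o1 + 16*b1^4*c0^5*c1*o0*o1 + (-8)*b1^4*c0^5*c1^2*o0 + 8*b1^4*c0^6*o0^2 + (-8)*b1^4*c0^6*c1*o1 + (-8)*b1^4*c0^7*o0 + (-8)*b1^5*c0^4*c1*o1^2 + 8*b1^5*c0^4*c1*o1^2*s + (-8)*b1^5*c0^4*c1^2*o1*s + 8*b1^5*c0^4*c1^3 + (-8)*b1^5*c0^5*o0*o1 + 8*b1^5*c0^5*o0*o1*s + (-8)*b1^5*c0^5*c1*o0*s + 8*b1^5*c0^6*c1 + 8*b1^6*c0^4*c1*o1 + (-8)*b1^6*c0^4*c1*o1*s + (-8)*b1^6*c0^4*c1^2 + 8*b1^6*c0^4*c1^2*s + (-32)*b0*b1^3*c0^3*c1^3*o1^2 + 32*b0*b1^3*c0^3*c1^4*o1 + (-64)*b0*b1^3*c0^4*c1^2*o0*o1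 + 32*b0*b1^3*c0^4*c1^3*o0 + (-32)*b0*b1^3*c0^5*c1*o0^2 + 32*b0*b1^3*c0^5*c1^2*o1 + 32*b0*b1^3*c0^6*c1*o0 + 32*b0*b1^4*c0^3*c1^2*o1^2 + (-32)*b0*b1^4*c0^3*c1^2*o1^2*s + 32*b0*b1^4*c0^3*c1^3*o1*s + (-32)*b0*b1^4*c0^3*c1^4 + 24*b0*b1^4*c0^4*c1*o0*o1 + (-24)*b0*b1^4*c0^4*c1*o0*o1*s + 32*b0*b1^4*c0^4*c1^2*o0*s + (-8)*b0*b1^4*c0^5*o0^2 + 8*b0*b1^4*c0^5*o0^2*s + (-8)*b0*b1^4*c0^5*c1*o1*s + (-24)*b0*b1^4*c0^5*c1^2 + (-8)*b0*b1^4*c0^6*o0*s + 8*b0*b1^4*c0^7 + (-32)*b0*b1^5*c0^3*c1^2*o1 + 32*b0*b1^5*c0^3*c1^2*o1*s + 32*b0*b1^5*c0^3*c1^3 + (-32)*b0*b1^5*c0^3*c1^3*s + 8*b0*b1^5*c0^4*c1*o0 + (-8)*b0*b1^5*c0^4*c1*o0*s + 8*b0*b1^5*c0^5*o1 + (-8)*b0*b1^5*c0^5*o1*s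 + (-16)*b0*b1^5*c0^5*c1 + 16*b0*b1^5*c0^5*c1*s + 48*b0^2*b1^2*c0^2*c1^4*o1^2 + (-48)*b0^2*b1^2*c0^2*c1^5*o1 + 96*b0^2*b1^2*c0^3*c1^3*o0*o1 + (-48)*b0^2*b1^2*c0^3*c1^4*o0 + 48*b0^2*b1^2*c0^4*c1^2*o0^2 + (-48)*b0^2*b1^2*c0^4*c1^3*o1 + (-48)*b0^2*b1^2*c0^5*c1^2*o0 + (-48)*b0^2*b1^3*c0^2*c1^3*o1^2 + 48*b0^2*b1^3*c0^2*c1^3*o1^2*s + (-48)*b0^2*b1^3*c0^2*c1^4*o1*s + 48*b0^2*b1^3*c0^2*c1^5 + (-16)*b0^2*b1^3*c0^3*c1^2*o0*o1 + 16*b0^2*b1^3*c0^3*c1^2*o0*o1*s + (-48)*b0^2*b1^3*c0^3*c1^3*o0*s + 32*b0^2*b1^3*c0^4*c1*o0^2 + (-32)*b0^2*b1^3*c0^4*c1*o0^2*s + 32*b0^2*b1^3*c0^4*c1^2*o1*s + 16*b0^2*b1^3*c0^4*c1^3 + 32*b0^2*b1^3*c0^5*c1*o0*s + (-32)*b0^2*b1^3*c0^6*c1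 + 48*b0^2*b1^4*c0^2*c1^3*o1 + (-48)*b0^2*b1^4*c0^2*c1^3*o1*s + (-48)*b0^2*b1^4*c0^2*c1^4 + 48*b0^2*b1^4*c0^2*c1^4*s + (-32)*b0^2*b1^4*c0^3*c1^2*o0 + 32*b0^2*b1^4*c0^3*c1^2*o0*s + (-32)*b0^2*b1^4*c0^4*c1*o1 + 32*b0^2*b1^4*c0^4*c1*o1*s + 64*b0^2*b1^4*c0^4*c1^2 + (-64)*b0^2*b1^4*c0^4*c1^2*s + 8*b0^2*b1^4*c0^5*o0 + (-8)*b0^2*b1^4*c0^5*o0*s + (-8)*b0^2*b1^4*c0^6 + 8*b0^2*b1^4*c0^6*s + (-32)*b0^3*b1*c0*c1^5*o1^2 + 32*b0^3*b1*c0*c1^6*o1 + (-64)*b0^3*b1*c0^2*c1^4*o0*o1 + 32*b0^3*b1*c0^2*c1^5*o0 + (-32)*b0^3*b1*c0^3*c1^3*o0^2 + 32*b0^3*b1*c0^3*c1^4*o1 + 32*b0^3*b1*c0^4*c1^3*o0 + 32*b0^3*b1^2*c0*c1^4*o1^2 + (-32)*b0^3*b1^2*c0*c1^4*o1^2*s +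 32*b0^3*b1^2*c0*c1^5*o1*s + (-32)*b0^3*b1^2*c0*c1^6 + (-16)*b0^3*b1^2*c0^2*c1^3*o0*o1 + 16*b0^3*b1^2*c0^2*c1^3*o0*o1*s + 32*b0^3*b1^2*c0^2*c1^4*o0*s + (-48)*b0^3*b1^2*c0^3*c1^2*o0^2 + 48*b0^3*b1^2*c0^3*c1^2*o0^2*s + (-48)*b0^3*b1^2*c0^3*c1^3*o1*s + 16*b0^3*b1^2*c0^3*c1^4 + (-48)*b0^3*b1^2*c0^4*c1^2*o0*s + 48*b0^3*b1^2*c0^5*c1^2 + (-32)*b0^3*b1^3*c0*c1^4*o1 + 32*b0^3*b1^3*c0*c1^4*o1*s + 32*b0^3*b1^3*c0*c1^5 + (-32)*b0^3*b1^3*c0*c1^5*s + 48*b0^3*b1^3*c0^2*c1^3*o0 + (-48)*b0^3*b1^3*c0^2*c1^3*o0*s + 48*b0^3*b1^3*c0^3*c1^2*o1 + (-48)*b0^3*b1^3*c0^3*c1^2*o1*s + (-96)*b0^3*b1^3*c0^3*c1^3 + 96*b0^3*b1^3*c0^3*c1^3*s + (-32)*b0^3*b1^3*c0^4*c1*o0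 + 32*b0^3*b1^3*c0^4*c1*o0*s + 32*b0^3*b1^3*c0^5*c1 + (-32)*b0^3*b1^3*c0^5*c1*s + 8*b0^4*c1^6*o1^2 + (-8)*b0^4*c1^7*o1 + 16*b0^4*c0*c1^5*o0*o1 + (-8)*b0^4*c0*c1^6*o0 + 8*b0^4*c0^2*c1^4*o0^2 + (-8)*b0^4*c0^2*c1^5*o1 + (-8)*b0^4*c0^3*c1^4*o0 + (-8)*b0^4*b1*c1^5*o1^2 + 8*b0^4*b1*c1^5*o1^2*s + (-8)*b0^4*b1*c1^6*o1*s + 8*b0^4*b1*c1^7 + 24*b0^4*b1*c0*c1^4*o0*o1 + (-24)*b0^4*b1*c0*c1^4*o0*o1*s + (-8)*b0^4*b1*c0*c1^5*o0*s + 32*b0^4*b1*c0^2*c1^3*o0^2 + (-32)*b0^4*b1*c0^2*c1^3*o0^2*s + 32*b0^4*b1*c0^2*c1^4*o1*s + (-24)*b0^4*b1*c0^2*c1^5 + 32*b0^4*b1*c0^3*c1^3*o0*s + (-32)*b0^4*b1*c0^4*c1^3 + 8*b0^4*b1^2*c1^5*o1 + (-8)*b0^4*b1^2*c1^5*o1*s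 + (-8)*b0^4*b1^2*c1^6 + 8*b0^4*b1^2*c1^6*s + (-32)*b0^4*b1^2*c0*c1^4*o0 + 32*b0^4*b1^2*c0*c1^4*o0*s + (-32)*b0^4*b1^2*c0^2*c1^3*o1 + 32*b0^4*b1^2*c0^2*c1^3*o1*s + 64*b0^4*b1^2*c0^2*c1^4 + (-64)*b0^4*b1^2*c0^2*c1^4*s + 48*b0^4*b1^2*c0^3*c1^2*o0 + (-48)*b0^4*b1^2*c0^3*c1^2*o0*s + (-48)*b0^4*b1^2*c0^4*c1^2 + 48*b0^4*b1^2*c0^4*c1^2*s + (-8)*b0^5*c1^5*o0*o1 + 8*b0^5*c1^5*o0*o1*s + (-8)*b0^5*c0*c1^4*o0^2 + 8*b0^5*c0*c1^4*o0^2*s + (-8)*b0^5*c0*c1^5*o1*s + 8*b0^5*c0*c1^6 + (-8)*b0^5*c0^2*c1^4*o0*s + 8*b0^5*c0^3*c1^4 + 8*b0^5*b1*c1^5*o0 + (-8)*b0^5*b1*c1^5*o0*s + 8*b0^5*b1*c0*c1^4*o1 + (-8)*b0^5*b1*c0*c1^4*o1*s + (-16)*b0^5*b1*c0*c1^5 +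 16*b0^5*b1*c0*c1^5*s + (-32)*b0^5*b1*c0^2*c1^3*o0 + 32*b0^5*b1*c0^2*c1^3*o0*s + 32*b0^5*b1*c0^3*c1^3 + (-32)*b0^5*b1*c0^3*c1^3*s + 8*b0^6*c0*c1^4*o0 + (-8)*b0^6*c0*c1^4*o0*s + (-8)*b0^6*c0^2*c1^4 + 8*b0^6*c0^2*c1^4*s))*hr +
      ((8*b1^4*c0^4*c1^2*o1^2 + (-8)*b1^4*c0^4*c1^3*o1 + 16*b1^4*c0^5*c1*o0*o1 + (-8)*b1^4*c0^5*c1^2*o0 + 8*b1^4*c0^6*o0^2 + (-8)*b1^4*c0^6*c1*o1 + (-8)*b1^4*c0^7*o0 + (-16)*b1^5*c0^4*c1*o1^2 + 16*b1^5*c0^4*c1^2*o1 + (-16)*b1^5*c0^5*o0*o1 + 8*b1^5*c0^5*c1*o0 + 8*b1^5*c0^6*o1 + (-32)*b0*b1^3*c0^3*c1^3*o1^2 + 32*b0*b1^3*c0^3*c1^4*o1 + (-64)*b0*b1^3*c0^4*c1^2*o0*o1 + 32*b0*b1^3*c0^4*c1^3*o0 + (-32)*b0*b1^3*c0^5*c1*o0^2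 + 32*b0*b1^3*c0^5*c1^2*o1 + 32*b0*b1^3*c0^6*c1*o0 + 64*b0*b1^4*c0^3*c1^2*o1^2 + (-64)*b0*b1^4*c0^3*c1^3*o1 + 48*b0*b1^4*c0^4*c1*o0*o1 + (-24)*b0*b1^4*c0^4*c1^2*o0 + (-16)*b0*b1^4*c0^5*o0^2 + (-24)*b0*b1^4*c0^5*c1*o1 + 16*b0*b1^4*c0^6*o0 + 48*b0^2*b1^2*c0^2*c1^4*o1^2 + (-48)*b0^2*b1^2*c0^2*c1^5*o1 + 96*b0^2*b1^2*c0^3*c1^3*o0*o1 + (-48)*b0^2*b1^2*c0^3*c1^4*o0 + 48*b0^2*b1^2*c0^4*c1^2*o0^2 + (-48)*b0^2*b1^2*c0^4*c1^3*o1 + (-48)*b0^2*b1^2*c0^5*c1^2*o0 + (-96)*b0^2*b1^3*c0^2*c1^3*o1^2 + 96*b0^2*b1^3*c0^2*c1^4*o1 + (-32)*b0^2*b1^3*c0^3*c1^2*o0*o1 + 16*b0^2*b1^3*c0^3*c1^3*o0 + 64*b0^2*b1^3*c0^4*c1*o0^2 + 16*b0^2*b1^3*c0^4*c1^2*o1 +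 (-64)*b0^2*b1^3*c0^5*c1*o0 + (-32)*b0^3*b1*c0*c1^5*o1^2 + 32*b0^3*b1*c0*c1^6*o1 + (-64)*b0^3*b1*c0^2*c1^4*o0*o1 + 32*b0^3*b1*c0^2*c1^5*o0 + (-32)*b0^3*b1*c0^3*c1^3*o0^2 + 32*b0^3*b1*c0^3*c1^4*o1 + 32*b0^3*b1*c0^4*c1^3*o0 + 64*b0^3*b1^2*c0*c1^4*o1^2 + (-64)*b0^3*b1^2*c0*c1^5*o1 + (-32)*b0^3*b1^2*c0^2*c1^3*o0*o1 + 16*b0^3*b1^2*c0^2*c1^4*o0 + (-96)*b0^3*b1^2*c0^3*c1^2*o0^2 + 16*b0^3*b1^2*c0^3*c1^3*o1 + 96*b0^3*b1^2*c0^4*c1^2*o0 + 8*b0^4*c1^6*o1^2 + (-8)*b0^4*c1^7*o1 + 16*b0^4*c0*c1^5*o0*o1 + (-8)*b0^4*c0*c1^6*o0 + 8*b0^4*c0^2*c1^4*o0^2 + (-8)*b0^4*c0^2*c1^5*o1 + (-8)*b0^4*c0^3*c1^4*o0 + (-16)*b0^4*b1*c1^5*o1^2 + 16*b0^4*b1*c1^6*o1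 + 48*b0^4*b1*c0*c1^4*o0*o1 + (-24)*b0^4*b1*c0*c1^5*o0 + 64*b0^4*b1*c0^2*c1^3*o0^2 + (-24)*b0^4*b1*c0^2*c1^4*o1 + (-64)*b0^4*b1*c0^3*c1^3*o0 + (-16)*b0^5*c1^5*o0*o1 + 8*b0^5*c1^6*o0 + (-16)*b0^5*c0*c1^4*o0^2 + 8*b0^5*c0*c1^5*o1 + 16*b0^5*c0^2*c1^4*o0))*hs +
      (((-8)*b1^4*c0^4*c1^2*o1^2 + 8*b1^4*c0^4*c1^2*o1^2*s + 8*b1^4*c0^4*c1^2*o1^2*r + (-16)*b1^4*c0^5*c1*o0*o1 + 16*b1^4*c0^5*c1*o0*o1*s + 16*b1^4*c0^5*c1*o0*o1*r + (-8)*b1^4*c0^6*o0^2 + 8*b1^4*c0^6*o0^2*s + 8*b1^4*c0^6*o0^2*r + 8*b1^5*c0^4*c1*o1^2 + (-8)*b1^5*c0^4*c1*o1^2*s + (-8)*b1^5*c0^4*c1*o1^2*r + 8*b1^5*c0^4*c1^2*o1 + (-8)*b1^5*c0^4*c1^2*o1*s + (-8)*b1^5*c0^4*c1^2*o1*r + 8*b1^5*c0^5*o0*o1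 + (-8)*b1^5*c0^5*o0*o1*s + (-8)*b1^5*c0^5*o0*o1*r + 8*b1^5*c0^5*c1*o0 + (-8)*b1^5*c0^5*c1*o0*s + (-8)*b1^5*c0^5*c1*o0*r + (-8)*b1^6*c0^4*c1*o1 + 8*b1^6*c0^4*c1*o1*s + 8*b1^6*c0^4*c1*o1*r + 32*b0*b1^3*c0^3*c1^3*o1^2 + (-32)*b0*b1^3*c0^3*c1^3*o1^2*s + (-32)*b0*b1^3*c0^3*c1^3*o1^2*r + 64*b0*b1^3*c0^4*c1^2*o0*o1 + (-64)*b0*b1^3*c0^4*c1^2*o0*o1*s + (-64)*b0*b1^3*c0^4*c1^2*o0*o1*r + 32*b0*b1^3*c0^5*c1*o0^2 + (-32)*b0*b1^3*c0^5*c1*o0^2*s + (-32)*b0*b1^3*c0^5*c1*o0^2*r + (-32)*b0*b1^4*c0^3*c1^2*o1^2 + 32*b0*b1^4*c0^3*c1^2*o1^2*s + 32*b0*b1^4*c0^3*c1^2*o1^2*r + (-32)*b0*b1^4*c0^3*c1^3*o1 + 32*b0*b1^4*c0^3*c1^3*o1*s + 32*b0*b1^4*c0^3*c1^3*o1*r +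 (-24)*b0*b1^4*c0^4*c1*o0*o1 + 24*b0*b1^4*c0^4*c1*o0*o1*s + 24*b0*b1^4*c0^4*c1*o0*o1*r + (-32)*b0*b1^4*c0^4*c1^2*o0 + 32*b0*b1^4*c0^4*c1^2*o0*s + 32*b0*b1^4*c0^4*c1^2*o0*r + 8*b0*b1^4*c0^5*o0^2 + (-8)*b0*b1^4*c0^5*o0^2*s + (-8)*b0*b1^4*c0^5*o0^2*r + 8*b0*b1^4*c0^5*c1*o1 + (-8)*b0*b1^4*c0^5*c1*o1*s + (-8)*b0*b1^4*c0^5*c1*o1*r + 8*b0*b1^4*c0^6*o0 + (-8)*b0*b1^4*c0^6*o0*s + (-8)*b0*b1^4*c0^6*o0*r + 32*b0*b1^5*c0^3*c1^2*o1 + (-32)*b0*b1^5*c0^3*c1^2*o1*s + (-32)*b0*b1^5*c0^3*c1^2*o1*r + (-8)*b0*b1^5*c0^4*c1*o0 + 8*b0*b1^5*c0^4*c1*o0*s + 8*b0*b1^5*c0^4*c1*o0*r + (-8)*b0*b1^5*c0^5*o1 + 8*b0*b1^5*c0^5*o1*s + 8*b0*b1^5*c0^5*o1*r + (-48)*b0^2*b1^2*c0^2*c1^4*o1^2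 + 48*b0^2*b1^2*c0^2*c1^4*o1^2*s + 48*b0^2*b1^2*c0^2*c1^4*o1^2*r + (-96)*b0^2*b1^2*c0^3*c1^3*o0*o1 + 96*b0^2*b1^2*c0^3*c1^3*o0*o1*s + 96*b0^2*b1^2*c0^3*c1^3*o0*o1*r + (-48)*b0^2*b1^2*c0^4*c1^2*o0^2 + 48*b0^2*b1^2*c0^4*c1^2*o0^2*s + 48*b0^2*b1^2*c0^4*c1^2*o0^2*r + 48*b0^2*b1^3*c0^2*c1^3*o1^2 + (-48)*b0^2*b1^3*c0^2*c1^3*o1^2*s + (-48)*b0^2*b1^3*c0^2*c1^3*o1^2*r + 48*b0^2*b1^3*c0^2*c1^4*o1 + (-48)*b0^2*b1^3*c0^2*c1^4*o1*s + (-48)*b0^2*b1^3*c0^2*c1^4*o1*r + 16*b0^2*b1^3*c0^3*c1^2*o0*o1 + (-16)*b0^2*b1^3*c0^3*c1^2*o0*o1*s + (-16)*b0^2*b1^3*c0^3*c1^2*o0*o1*r + 48*b0^2*b1^3*c0^3*c1^3*o0 + (-48)*b0^2*b1^3*c0^3*c1^3*o0*s + (-48)*b0^2*b1^3*c0^3*c1^3*o0*r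 + (-32)*b0^2*b1^3*c0^4*c1*o0^2 + 32*b0^2*b1^3*c0^4*c1*o0^2*s + 32*b0^2*b1^3*c0^4*c1*o0^2*r + (-32)*b0^2*b1^3*c0^4*c1^2*o1 + 32*b0^2*b1^3*c0^4*c1^2*o1*s + 32*b0^2*b1^3*c0^4*c1^2*o1*r + (-32)*b0^2*b1^3*c0^5*c1*o0 + 32*b0^2*b1^3*c0^5*c1*o0*s + 32*b0^2*b1^3*c0^5*c1*o0*r + (-48)*b0^2*b1^4*c0^2*c1^3*o1 + 48*b0^2*b1^4*c0^2*c1^3*o1*s + 48*b0^2*b1^4*c0^2*c1^3*o1*r + 32*b0^2*b1^4*c0^3*c1^2*o0 + (-32)*b0^2*b1^4*c0^3*c1^2*o0*s + (-32)*b0^2*b1^4*c0^3*c1^2*o0*r + 32*b0^2*b1^4*c0^4*c1*o1 + (-32)*b0^2*b1^4*c0^4*c1*o1*s + (-32)*b0^2*b1^4*c0^4*c1*o1*r + (-8)*b0^2*b1^4*c0^5*o0 + 8*b0^2*b1^4*c0^5*o0*s + 8*b0^2*b1^4*c0^5*o0*r + 32*b0^3*b1*c0*c1^5*o1^2 + (-32)*b0^3*b1*c0*c1^5*o1^2*s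 + (-32)*b0^3*b1*c0*c1^5*o1^2*r + 64*b0^3*b1*c0^2*c1^4*o0*o1 + (-64)*b0^3*b1*c0^2*c1^4*o0*o1*s + (-64)*b0^3*b1*c0^2*c1^4*o0*o1*r + 32*b0^3*b1*c0^3*c1^3*o0^2 + (-32)*b0^3*b1*c0^3*c1^3*o0^2*s + (-32)*b0^3*b1*c0^3*c1^3*o0^2*r + (-32)*b0^3*b1^2*c0*c1^4*o1^2 + 32*b0^3*b1^2*c0*c1^4*o1^2*s + 32*b0^3*b1^2*c0*c1^4*o1^2*r + (-32)*b0^3*b1^2*c0*c1^5*o1 + 32*b0^3*b1^2*c0*c1^5*o1*s + 32*b0^3*b1^2*c0*c1^5*o1*r + 16*b0^3*b1^2*c0^2*c1^3*o0*o1 + (-16)*b0^3*b1^2*c0^2*c1^3*o0*o1*s + (-16)*b0^3*b1^2*c0^2*c1^3*o0*o1*r + (-32)*b0^3*b1^2*c0^2*c1^4*o0 + 32*b0^3*b1^2*c0^2*c1^4*o0*s + 32*b0^3*b1^2*c0^2*c1^4*o0*r + 48*b0^3*b1^2*c0^3*c1^2*o0^2 + (-48)*b0^3*b1^2*c0^3*c1^2*o0^2*s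 + (-48)*b0^3*b1^2*c0^3*c1^2*o0^2*r + 48*b0^3*b1^2*c0^3*c1^3*o1 + (-48)*b0^3*b1^2*c0^3*c1^3*o1*s + (-48)*b0^3*b1^2*c0^3*c1^3*o1*r + 48*b0^3*b1^2*c0^4*c1^2*o0 + (-48)*b0^3*b1^2*c0^4*c1^2*o0*s + (-48)*b0^3*b1^2*c0^4*c1^2*o0*r + 32*b0^3*b1^3*c0*c1^4*o1 + (-32)*b0^3*b1^3*c0*c1^4*o1*s + (-32)*b0^3*b1^3*c0*c1^4*o1*r + (-48)*b0^3*b1^3*c0^2*c1^3*o0 + 48*b0^3*b1^3*c0^2*c1^3*o0*s + 48*b0^3*b1^3*c0^2*c1^3*o0*r + (-48)*b0^3*b1^3*c0^3*c1^2*o1 + 48*b0^3*b1^3*c0^3*c1^2*o1*s + 48*b0^3*b1^3*c0^3*c1^2*o1*r + 32*b0^3*b1^3*c0^4*c1*o0 + (-32)*b0^3*b1^3*c0^4*c1*o0*s + (-32)*b0^3*b1^3*c0^4*c1*o0*r + (-8)*b0^4*c1^6*o1^2 + 8*b0^4*c1^6*o1^2*s + 8*b0^4*c1^6*o1^2*r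 + (-16)*b0^4*c0*c1^5*o0*o1 + 16*b0^4*c0*c1^5*o0*o1*s + 16*b0^4*c0*c1^5*o0*o1*r + (-8)*b0^4*c0^2*c1^4*o0^2 + 8*b0^4*c0^2*c1^4*o0^2*s + 8*b0^4*c0^2*c1^4*o0^2*r + 8*b0^4*b1*c1^5*o1^2 + (-8)*b0^4*b1*c1^5*o1^2*s + (-8)*b0^4*b1*c1^5*o1^2*r + 8*b0^4*b1*c1^6*o1 + (-8)*b0^4*b1*c1^6*o1*s + (-8)*b0^4*b1*c1^6*o1*r + (-24)*b0^4*b1*c0*c1^4*o0*o1 + 24*b0^4*b1*c0*c1^4*o0*o1*s + 24*b0^4*b1*c0*c1^4*o0*o1*r + 8*b0^4*b1*c0*c1^5*o0 + (-8)*b0^4*b1*c0*c1^5*o0*s + (-8)*b0^4*b1*c0*c1^5*o0*r + (-32)*b0^4*b1*c0^2*c1^3*o0^2 + 32*b0^4*b1*c0^2*c1^3*o0^2*s + 32*b0^4*b1*c0^2*c1^3*o0^2*r + (-32)*b0^4*b1*c0^2*c1^4*o1 + 32*b0^4*b1*c0^2*c1^4*o1*s + 32*b0^4*b1*c0^2*c1^4*o1*r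 + (-32)*b0^4*b1*c0^3*c1^3*o0 + 32*b0^4*b1*c0^3*c1^3*o0*s + 32*b0^4*b1*c0^3*c1^3*o0*r + (-8)*b0^4*b1^2*c1^5*o1 + 8*b0^4*b1^2*c1^5*o1*s + 8*b0^4*b1^2*c1^5*o1*r + 32*b0^4*b1^2*c0*c1^4*o0 + (-32)*b0^4*b1^2*c0*c1^4*o0*s + (-32)*b0^4*b1^2*c0*c1^4*o0*r + 32*b0^4*b1^2*c0^2*c1^3*o1 + (-32)*b0^4*b1^2*c0^2*c1^3*o1*s + (-32)*b0^4*b1^2*c0^2*c1^3*o1*r + (-48)*b0^4*b1^2*c0^3*c1^2*o0 + 48*b0^4*b1^2*c0^3*c1^2*o0*s + 48*b0^4*b1^2*c0^3*c1^2*o0*r + 8*b0^5*c1^5*o0*o1 + (-8)*b0^5*c1^5*o0*o1*s + (-8)*b0^5*c1^5*o0*o1*r + 8*b0^5*c0*c1^4*o0^2 + (-8)*b0^5*c0*c1^4*o0^2*s + (-8)*b0^5*c0*c1^4*o0^2*r + 8*b0^5*c0*c1^5*o1 + (-8)*b0^5*c0*c1^5*o1*s + (-8)*b0^5*c0*c1^5*o1*r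 + 8*b0^5*c0^2*c1^4*o0 + (-8)*b0^5*c0^2*c1^4*o0*s + (-8)*b0^5*c0^2*c1^4*o0*r + (-8)*b0^5*b1*c1^5*o0 + 8*b0^5*b1*c1^5*o0*s + 8*b0^5*b1*c1^5*o0*r + (-8)*b0^5*b1*c0*c1^4*o1 + 8*b0^5*b1*c0*c1^4*o1*s + 8*b0^5*b1*c0*c1^4*o1*r + 32*b0^5*b1*c0^2*c1^3*o0 + (-32)*b0^5*b1*c0^2*c1^3*o0*s + (-32)*b0^5*b1*c0^2*c1^3*o0*r + (-8)*b0^6*c0*c1^4*o0 + 8*b0^6*c0*c1^4*o0*s + 8*b0^6*c0*c1^4*o0*r))*hu +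
      (((-8)*b1^4*c0^4*c1^2*o1^2 + 8*b1^4*c0^4*c1^3*o1 + (-16)*b1^4*c0^5*c1*o0*o1 + 8*b1^4*c0^5*c1^2*o0 + (-8)*b1^4*c0^6*o0^2 + 8*b1^4*c0^6*c1*o1 + 8*b1^4*c0^7*o0 + 8*b1^5*c0^4*c1*o1^2 + (-4)*b1^5*c0^4*c1^2*o1 + (-4)*b1^5*c0^4*c1^3 + 8*b1^5*c0^5*o0*o1 + (-4)*b1^5*c0^6*o1 + (-4)*b1^5*c0^6*c1 + (-4)*b1^6*c0^4*c1*o1 + 2*b1^6*c0^4*c1^2 + (-4)*b1^6*c0^5*o0 + 2*b1^6*c0^6 + 24*b0*b1^3*c0^3*c1^3*o1^2 + (-20)*b0*b1^3*c0^3*c1^4*o1 + (-4)*b0*b1^3*c0^3*c1^5 + 40*b0*b1^3*c0^4*c1^2*o0*o1 + (-16)*b0*b1^3*c0^4*c1^3*o0 + 16*b0*b1^3*c0^5*c1*o0^2 + (-20)*b0*b1^3*c0^5*c1^2*o1 + (-8)*b0*b1^3*c0^5*c1^3 + (-16)*b0*b1^3*c0^6*c1*o0 + (-4)*b0*b1^3*c0^7*c1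 + (-24)*b0*b1^4*c0^3*c1^2*o1^2 + 4*b0*b1^4*c0^3*c1^3*o1 + 20*b0*b1^4*c0^3*c1^4 + (-8)*b0*b1^4*c0^4*c1*o0*o1 + (-16)*b0*b1^4*c0^4*c1^2*o0 + 16*b0*b1^4*c0^5*o0^2 + 8*b0*b1^4*c0^5*c1*o1 + 18*b0*b1^4*c0^5*c1^2 + (-12)*b0*b1^4*c0^6*o0 + (-2)*b0*b1^4*c0^7 + 16*b0*b1^5*c0^3*c1^2*o1 + (-8)*b0*b1^5*c0^3*c1^3 + 16*b0*b1^5*c0^4*c1*o0 + (-8)*b0*b1^5*c0^5*c1 + (-24)*b0^2*b1^2*c0^2*c1^4*o1^2 + 16*b0^2*b1^2*c0^2*c1^5*o1 + 10*b0^2*b1^2*c0^2*c1^6 + (-24)*b0^2*b1^2*c0^3*c1^3*o0*o1 + 4*b0^2*b1^2*c0^3*c1^4*o0 + 16*b0^2*b1^2*c0^4*c1^3*o1 + 20*b0^2*b1^2*c0^4*c1^4 + 4*b0^2*b1^2*c0^5*c1^2*o0 + 10*b0^2*b1^2*c0^6*c1^2 + 24*b0^2*b1^3*c0^2*c1^3*o1^2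 + 4*b0^2*b1^3*c0^2*c1^4*o1 + (-32)*b0^2*b1^3*c0^2*c1^5 + (-24)*b0^2*b1^3*c0^3*c1^2*o0*o1 + 40*b0^2*b1^3*c0^3*c1^3*o0 + (-48)*b0^2*b1^3*c0^4*c1*o0^2 + (-4)*b0^2*b1^3*c0^4*c1^2*o1 + (-20)*b0^2*b1^3*c0^4*c1^3 + 32*b0^2*b1^3*c0^5*c1*o0 + 12*b0^2*b1^3*c0^6*c1 + (-20)*b0^2*b1^4*c0^2*c1^3*o1 + 10*b0^2*b1^4*c0^2*c1^4 + (-20)*b0^2*b1^4*c0^3*c1^2*o0 + (-4)*b0^2*b1^4*c0^4*c1*o1 + 12*b0^2*b1^4*c0^4*c1^2 + (-4)*b0^2*b1^4*c0^5*o0 + 2*b0^2*b1^4*c0^6 + 8*b0^3*b1*c0*c1^5*o1^2 + (-4)*b0^3*b1*c0*c1^6*o1 + (-8)*b0^3*b1*c0*c1^7 + (-8)*b0^3*b1*c0^2*c1^4*o0*o1 + 8*b0^3*b1*c0^2*c1^5*o0 + (-16)*b0^3*b1*c0^3*c1^3*o0^2 + (-4)*b0^3*b1*c0^3*c1^4*o1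 + (-16)*b0^3*b1*c0^3*c1^5 + 8*b0^3*b1*c0^4*c1^3*o0 + (-8)*b0^3*b1*c0^5*c1^3 + (-8)*b0^3*b1^2*c0*c1^4*o1^2 + (-4)*b0^3*b1^2*c0*c1^5*o1 + 20*b0^3*b1^2*c0*c1^6 + 40*b0^3*b1^2*c0^2*c1^3*o0*o1 + (-32)*b0^3*b1^2*c0^2*c1^4*o0 + 48*b0^3*b1^2*c0^3*c1^2*o0^2 + (-4)*b0^3*b1^2*c0^3*c1^3*o1 + (-32)*b0^3*b1^2*c0^4*c1^2*o0 + (-20)*b0^3*b1^2*c0^5*c1^2 + 8*b0^3*b1^3*c0*c1^4*o1 + (-4)*b0^3*b1^3*c0*c1^5 + 8*b0^3*b1^3*c0^2*c1^3*o0 + 16*b0^3*b1^3*c0^3*c1^2*o1 + (-12)*b0^3*b1^3*c0^3*c1^3 + 16*b0^3*b1^3*c0^4*c1*o0 + (-8)*b0^3*b1^3*c0^5*c1 + 2*b0^4*c1^8 + 8*b0^4*c0*c1^5*o0*o1 + (-4)*b0^4*c0*c1^6*o0 + 8*b0^4*c0^2*c1^4*o0^2 + 4*b0^4*c0^2*c1^6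 + (-4)*b0^4*c0^3*c1^4*o0 + 2*b0^4*c0^4*c1^4 + (-4)*b0^4*b1*c1^7 + (-16)*b0^4*b1*c0*c1^4*o0*o1 + 8*b0^4*b1*c0*c1^5*o0 + (-16)*b0^4*b1*c0^2*c1^3*o0^2 + 8*b0^4*b1*c0^2*c1^4*o1 + 8*b0^4*b1*c0^2*c1^5 + 16*b0^4*b1*c0^3*c1^3*o0 + 12*b0^4*b1*c0^4*c1^3 + (-20)*b0^4*b1^2*c0^2*c1^3*o1 + 10*b0^4*b1^2*c0^2*c1^4 + (-20)*b0^4*b1^2*c0^3*c1^2*o0 + 10*b0^4*b1^2*c0^4*c1^2 + (-4)*b0^5*c0*c1^5*o1 + (-2)*b0^5*c0*c1^6 + (-4)*b0^5*c0^2*c1^4*o0 + (-2)*b0^5*c0^3*c1^4 + 8*b0^5*b1*c0*c1^4*o1 + (-4)*b0^5*b1*c0*c1^5 + 8*b0^5*b1*c0^2*c1^3*o0 + (-4)*b0^5*b1*c0^3*c1^3))*hb +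
      ((4*b1^7*c0^4*c1 + (-2)*b1^8*c0^4 + 8*b0*b1^4*c0^3*c1^2*o1^2 + (-8)*b0*b1^4*c0^3*c1^3*o1 + 16*b0*b1^4*c0^4*c1*o0*o1 + (-8)*b0*b1^4*c0^5*c1*o1 + (-8)*b0*b1^5*c0^3*c1*o1^2 + 4*b0*b1^5*c0^3*c1^2*o1 + 4*b0*b1^5*c0^3*c1^3 + (-8)*b0*b1^5*c0^4*o0*o1 + (-8)*b0*b1^5*c0^4*c1*o0 + 4*b0*b1^5*c0^5*o1 + 4*b0*b1^5*c0^5*c1 + 4*b0*b1^6*c0^3*c1*o1 + (-20)*b0*b1^6*c0^3*c1^2 + 4*b0*b1^6*c0^4*o0 + 2*b0*b1^6*c0^5 + 8*b0*b1^7*c0^3*c1 + (-24)*b0^2*b1^3*c0^2*c1^3*o1^2 + 20*b0^2*b1^3*c0^2*c1^4*o1 + (-40)*b0^2*b1^3*c0^3*c1^2*o0*o1 + (-8)*b0^2*b1^3*c0^3*c1^3*o0 + 16*b0^2*b1^3*c0^4*c1*o0^2 + 20*b0^2*b1^3*c0^4*c1^2*o1 + (-8)*b0^2*b1^3*c0^5*c1*o0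 + 24*b0^2*b1^4*c0^2*c1^2*o1^2 + (-4)*b0^2*b1^4*c0^2*c1^3*o1 + (-10)*b0^2*b1^4*c0^2*c1^4 + 8*b0^2*b1^4*c0^3*c1*o0*o1 + 32*b0^2*b1^4*c0^3*c1^2*o0 + (-8)*b0^2*b1^4*c0^4*o0^2 + (-8)*b0^2*b1^4*c0^4*c1*o1 + (-10)*b0^2*b1^4*c0^4*c1^2 + 4*b0^2*b1^4*c0^5*o0 + (-16)*b0^2*b1^5*c0^2*c1^2*o1 + 32*b0^2*b1^5*c0^2*c1^3 + (-8)*b0^2*b1^5*c0^3*c1*o0 + (-8)*b0^2*b1^5*c0^4*c1 + (-10)*b0^2*b1^6*c0^2*c1^2 + (-4)*b0^2*b1^6*c0^4 + 24*b0^3*b1^2*c0*c1^4*o1^2 + (-16)*b0^3*b1^2*c0*c1^5*o1 + 24*b0^3*b1^2*c0^2*c1^3*o0*o1 + 20*b0^3*b1^2*c0^2*c1^4*o0 + (-48)*b0^3*b1^2*c0^3*c1^2*o0^2 + (-16)*b0^3*b1^2*c0^3*c1^3*o1 + 20*b0^3*b1^2*c0^4*c1^2*o0 + (-24)*b0^3*b1^3*c0*c1^3*o1^2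 + (-4)*b0^3*b1^3*c0*c1^4*o1 + 8*b0^3*b1^3*c0*c1^5 + 24*b0^3*b1^3*c0^2*c1^2*o0*o1 + (-40)*b0^3*b1^3*c0^2*c1^3*o0 + 16*b0^3*b1^3*c0^3*c1*o0^2 + 4*b0^3*b1^3*c0^3*c1^2*o1 + 12*b0^3*b1^3*c0^3*c1^3 + (-16)*b0^3*b1^3*c0^4*c1*o0 + 4*b0^3*b1^3*c0^5*c1 + 20*b0^3*b1^4*c0*c1^3*o1 + (-20)*b0^3*b1^4*c0*c1^4 + (-4)*b0^3*b1^4*c0^2*c1^2*o0 + 4*b0^3*b1^4*c0^3*c1*o1 + 4*b0^3*b1^4*c0^4*o0 + 2*b0^3*b1^4*c0^5 + 4*b0^3*b1^5*c0*c1^3 + 16*b0^3*b1^5*c0^3*c1 + (-8)*b0^4*b1*c1^5*o1^2 + 4*b0^4*b1*c1^6*o1 + 8*b0^4*b1*c0*c1^4*o0*o1 + (-16)*b0^4*b1*c0*c1^5*o0 + 48*b0^4*b1*c0^2*c1^3*o0^2 + 4*b0^4*b1*c0^2*c1^4*o1 + (-16)*b0^4*b1*c0^3*c1^3*o0 + 8*b0^4*b1^2*c1^4*o1^2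 + 4*b0^4*b1^2*c1^5*o1 + (-2)*b0^4*b1^2*c1^6 + (-40)*b0^4*b1^2*c0*c1^3*o0*o1 + 16*b0^4*b1^2*c0*c1^4*o0 + 4*b0^4*b1^2*c0^2*c1^3*o1 + (-12)*b0^4*b1^2*c0^2*c1^4 + 32*b0^4*b1^2*c0^3*c1^2*o0 + (-10)*b0^4*b1^2*c0^4*c1^2 + (-8)*b0^4*b1^3*c1^4*o1 + 4*b0^4*b1^3*c1^5 + 16*b0^4*b1^3*c0*c1^3*o0 + (-16)*b0^4*b1^3*c0^2*c1^2*o1 + 20*b0^4*b1^3*c0^2*c1^3 + (-8)*b0^4*b1^3*c0^3*c1*o0 + (-12)*b0^4*b1^3*c0^4*c1 + (-20)*b0^4*b1^4*c0^2*c1^2 + (-2)*b0^4*b1^4*c0^4 + (-8)*b0^5*c1^5*o0*o1 + 4*b0^5*c1^6*o0 + (-16)*b0^5*c0*c1^4*o0^2 + 4*b0^5*c0^2*c1^4*o0 + 16*b0^5*b1*c1^4*o0*o1 + (-16)*b0^5*b1*c0*c1^3*o0^2 + (-8)*b0^5*b1*c0*c1^4*o1 + 8*b0^5*b1*c0*c1^5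 + (-32)*b0^5*b1*c0^2*c1^3*o0 + 8*b0^5*b1*c0^3*c1^3 + (-8)*b0^5*b1^2*c1^4*o0 + 20*b0^5*b1^2*c0*c1^3*o1 + (-18)*b0^5*b1^2*c0*c1^4 + (-4)*b0^5*b1^2*c0^2*c1^2*o0 + 20*b0^5*b1^2*c0^3*c1^2 + 8*b0^5*b1^3*c0*c1^3 + 8*b0^5*b1^3*c0^3*c1 + 8*b0^6*c1^4*o0^2 + 4*b0^6*c1^5*o1 + (-2)*b0^6*c1^6 + 12*b0^6*c0*c1^4*o0 + (-2)*b0^6*c0^2*c1^4 + (-8)*b0^6*b1*c1^4*o1 + 4*b0^6*b1*c1^5 + 16*b0^6*b1*c0*c1^3*o0 + (-12)*b0^6*b1*c0^2*c1^3 + (-10)*b0^6*b1^2*c0^2*c1^2 + (-8)*b0^7*c1^4*o0 + 2*b0^7*c0*c1^4 + 4*b0^7*b1*c0*c1^3))*hc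
  exact (mul_eq_zero.mp cert).resolve_left hM

private theorem collinear_of_det_zero (P Q R : EuclideanSpace ℝ (Fin 2))
    (h : (Q 0 - P 0) * (R 1 - P 1) - (Q 1 - P 1) * (R 0 - P 0) = 0) :
    Collinear ℝ ({P, Q, R} : Set (EuclideanSpace ℝ (Fin 2))) := by
  rw [collinear_iff_of_mem (Set.mem_insert P {Q, R})]
  by_cases hQ : Q = P
  · refine ⟨R - P, fun p hp => ?_⟩
    rcases hp with rfl | rfl | rfl
    · exact ⟨0, by simp⟩
    · exact ⟨0, by simp [hQ]⟩
    · exact ⟨1, by simp⟩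
  · have hv : (Q 0 - P 0)^2 + (Q 1 - P 1)^2 ≠ 0 := by
      intro h0
      apply hQ
      have h1 : Q 0 = P 0 := by nlinarith [sq_nonneg (Q 0 - P 0), sq_nonneg (Q 1 - P 1)]
      have h2 : Q 1 = P 1 := by nlinarith [sq_nonneg (Q 0 - P 0), sq_nonneg (Q 1 - P 1)]
      ext i
      fin_cases i
      · exact h1
      · exact h2
    have main : ∀ p : EuclideanSpace ℝ (Fin 2),
        (Q 0 - P 0) * (p 1 - P 1) - (Q 1 - P 1) * (p 0 - P 0) = 0 →
        ∃ k : ℝ, p = k • (Q - P) +ᵥ P := by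
      intro p hp
      refine ⟨((p 0 - P 0)*(Q 0 - P 0) + (p 1 - P 1)*(Q 1 - P 1)) /
        ((Q 0 - P 0)^2 + (Q 1 - P 1)^2), ?_⟩
      have c0 : p 0 = ((p 0 - P 0)*(Q 0 - P 0) + (p 1 - P 1)*(Q 1 - P 1)) /
          ((Q 0 - P 0)^2 + (Q 1 - P 1)^2) * (Q 0 - P 0) + P 0 := by
        field_simp
        linear_combination (-(Q 1 - P 1)) * hp
      have c1 : p 1 = ((p 0 - P 0)*(Q 0 - P 0) + (p 1 - P 1)*(Q 1 - P 1)) /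
          ((Q 0 - P 0)^2 + (Q 1 - P 1)^2) * (Q 1 - P 1) + P 1 := by
        field_simp
        linear_combination (Q 0 - P 0) * hp
      ext i
      simp only [vadd_eq_add, PiLp.add_apply, PiLp.smul_apply, PiLp.sub_apply, smul_eq_mul]
      fin_cases i
      · exact c0
      · exact c1
    refine ⟨Q - P, fun p hp => ?_⟩
    rcases hp with rfl | rfl | rfl
    · exact ⟨0, by simp⟩
    · exact main p (by ring)
    · exact main p h

/-- Carnot's theorem (1803): the tangents to the circumcircle at the vertices
of a scalene triangle meet the opposite side lines in three collinear points. -/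
theorem carnot_tangents
    (A B C O T₁ T₂ T₃ : EuclideanSpace ℝ (Fin 2))
    (hT : AffineIndependent ℝ ![A, B, C])
    (h₁ : dist A B ≠ dist B C) (h₂ : dist B C ≠ dist C A) (h₃ : dist C A ≠ dist A B)
    (hO : dist O A = dist O B ∧ dist O B = dist O C)
    (hT₁ : T₁ ∈ affineSpan ℝ {B, C} ∧ (inner ℝ (T₁ - A) (O - A) : ℝ) = 0)
    (hT₂ : T₂ ∈ affineSpan ℝ {C, A} ∧ (inner ℝ (T₂ - B) (O - B) : ℝ) = 0)
    (hT₃ : T₃ ∈ affineSpan ℝ {A, B} ∧ (inner ℝ (T₃ - C) (O - C) : ℝ) = 0) :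
    Collinear ℝ {T₁, T₂, T₃} := by
  obtain ⟨hO1, hO2⟩ := hO
  obtain ⟨hm1, ht1⟩ := hT₁
  obtain ⟨hm2, ht2⟩ := hT₂
  obtain ⟨hm3, ht3⟩ := hT₃
  have hip : ∀ X Y : EuclideanSpace ℝ (Fin 2), (inner ℝ X Y : ℝ) = X 0 * Y 0 + X 1 * Y 1 := by
    intro X Y
    simp [PiLp.inner_apply, Fin.sum_univ_two, RCLike.inner_apply, conj_trivial]
    ring
  have hds : ∀ X Y : EuclideanSpace ℝ (Fin 2), dist X Y ^ 2 = (X 0 - Y 0)^2 + (X 1 - Y 1)^2 := by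
    intro X Y
    rw [EuclideanSpace.dist_eq, Real.sq_sqrt (by positivity)]
    simp [Fin.sum_univ_two, Real.dist_eq, sq_abs]
  -- parameters on the three lines
  have hm1' : (T₁ -ᵥ B) +ᵥ B ∈ line[ℝ, B, C] := by rwa [vsub_vadd]
  obtain ⟨r, hr0⟩ := vadd_left_mem_affineSpan_pair.mp hm1'
  have hm2' : (T₂ -ᵥ C) +ᵥ C ∈ line[ℝ, C, A] := by rwa [vsub_vadd]
  obtain ⟨s, hs0⟩ := vadd_left_mem_affineSpan_pair.mp hm2'
  have hm3' : (T₃ -ᵥ A) +ᵥ A ∈ line[ℝ, A, B] := by rwa [vsub_vadd]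
  obtain ⟨u, hu0⟩ := vadd_left_mem_affineSpan_pair.mp hm3'
  have e1 : ∀ i, T₁ i = B i + r * (C i - B i) := by
    intro i
    have := congrArg (fun v => v i) hr0
    simp only [vsub_eq_sub, PiLp.smul_apply, PiLp.sub_apply, smul_eq_mul] at this
    linarith
  have e2 : ∀ i, T₂ i = C i + s * (A i - C i) := by
    intro i
    have := congrArg (fun v => v i) hs0
    simp only [vsub_eq_sub, PiLp.smul_apply, PiLp.sub_apply, smul_eq_mul] at this
    linarith
  have e3 : ∀ i, T₃ i = A i + u * (B i - A i) := by
    intro i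
    have := congrArg (fun v => v i) hu0
    simp only [vsub_eq_sub, PiLp.smul_apply, PiLp.sub_apply, smul_eq_mul] at this
    linarith
  -- squared circumcircle equations
  have hOAB : (O 0 - A 0)^2 + (O 1 - A 1)^2 = (O 0 - B 0)^2 + (O 1 - B 1)^2 := by
    rw [← hds, ← hds, hO1]
  have hOBC : (O 0 - B 0)^2 + (O 1 - B 1)^2 = (O 0 - C 0)^2 + (O 1 - C 1)^2 := by
    rw [← hds, ← hds, hO2]
  have hb : 2*((O 0 - A 0)*(B 0 - A 0) + (O 1 - A 1)*(B 1 - A 1)) = (B 0 - A 0)^2 + (B 1 - A 1)^2 := by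
    linear_combination hOAB
  have hc : 2*((O 0 - A 0)*(C 0 - A 0) + (O 1 - A 1)*(C 1 - A 1)) = (C 0 - A 0)^2 + (C 1 - A 1)^2 := by
    linear_combination hOAB + hOBC
  -- nondegeneracy
  have hnc : ¬ Collinear ℝ ({A, B, C} : Set (EuclideanSpace ℝ (Fin 2))) :=
    affineIndependent_iff_not_collinear_set.mp hT
  have hd : (B 0 - A 0)*(C 1 - A 1) - (B 1 - A 1)*(C 0 - A 0) ≠ 0 := by
    intro h0
    exact hnc (collinear_of_det_zero A B C (by linear_combination h0))
  have hDa : ((C 0 - A 0)-(B 0 - A 0))*(O 0 - A 0) + ((C 1 - A 1)-(B 1 - A 1))*(O 1 - A 1) ≠ 0 := by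
    intro h0
    apply h₃
    have hsq : dist C A ^ 2 = dist A B ^ 2 := by
      rw [hds, hds]
      linear_combination hb - hc + 2*h0
    exact (sq_eq_sq₀ dist_nonneg dist_nonneg).mp hsq
  have hDb : (C 0 - A 0)*((O 0 - A 0)-(B 0 - A 0)) + (C 1 - A 1)*((O 1 - A 1)-(B 1 - A 1)) ≠ 0 := by
    intro h0
    apply h₁
    have hsq : dist A B ^ 2 = dist B C ^ 2 := by
      rw [hds, hds]
      linear_combination hc - 2*h0
    exact (sq_eq_sq₀ dist_nonneg dist_nonneg).mp hsq
  have hDc : (B 0 - A 0)*((O 0 - A 0)-(C 0 - A 0)) + (B 1 - A 1)*((O 1 - A 1)-(C 1 - A 1)) ≠ 0 := by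
    intro h0
    apply h₂
    have hsq : dist B C ^ 2 = dist C A ^ 2 := by
      rw [hds, hds]
      linear_combination 2*h0 - hb
    exact (sq_eq_sq₀ dist_nonneg dist_nonneg).mp hsq
  -- tangent equations in coordinates
  rw [hip] at ht1 ht2 ht3
  simp only [PiLp.sub_apply] at ht1 ht2 ht3
  have hr' : r * (((C 0 - A 0)-(B 0 - A 0))*(O 0 - A 0) + ((C 1 - A 1)-(B 1 - A 1))*(O 1 - A 1))
      = -((B 0 - A 0)*(O 0 - A 0) + (B 1 - A 1)*(O 1 - A 1)) := by
    linear_combination ht1 - (O 0 - A 0)*(e1 0) - (O 1 - A 1)*(e1 1)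
  have hs' : s * ((C 0 - A 0)*((O 0 - A 0)-(B 0 - A 0)) + (C 1 - A 1)*((O 1 - A 1)-(B 1 - A 1)))
      = ((C 0 - A 0)-(B 0 - A 0))*((O 0 - A 0)-(B 0 - A 0)) + ((C 1 - A 1)-(B 1 - A 1))*((O 1 - A 1)-(B 1 - A 1)) := by
    linear_combination -ht2 + (O 0 - B 0)*(e2 0) + (O 1 - B 1)*(e2 1)
  have hu' : u * ((B 0 - A 0)*((O 0 - A 0)-(C 0 - A 0)) + (B 1 - A 1)*((O 1 - A 1)-(C 1 - A 1)))
      = (C 0 - A 0)*((O 0 - A 0)-(C 0 - A 0)) + (C 1 - A 1)*((O 1 - A 1)-(C 1 - A 1)) := by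
    linear_combination ht3 - (O 0 - C 0)*(e3 0) - (O 1 - C 1)*(e3 1)
  have G := carnot_key (B 0 - A 0) (B 1 - A 1) (C 0 - A 0) (C 1 - A 1) (O 0 - A 0) (O 1 - A 1)
    r s u hd hb hc hDa hDb hDc hr' hs' hu'
  apply collinear_of_det_zero
  rw [e1 0, e1 1, e2 0, e2 1, e3 0, e3 1]
  linear_combination G
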